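/- Let $\mathbf{a}: \Theta \to \mathbb{C}^m$ be continuous on a compact set $\Theta$, $X \in \mathbb{C}^{m\times T}$, $\lambda > 0$. Suppose $\hat\theta_1,\dots,\hat\theta_n \in \Theta$ and $\hat S \in \mathbb{C}^{n\times T}$ with all rows nonzero satisfy, with $\hat N = X - \sum_i \mathbf{a}(\hat\theta_i)\hat S_i$ (where $\hat S_i$ is row $i$): (a) $\mathbf{a}(\hat\theta_i)^H \hat N = \lambda \|\hat S_i\|_2^{-1} \hat S_i$ for all $i$, and (b) $\|\mathbf{a}(\theta)^H \hat N\|_2 \leq \lambda$ for all $\theta \in \Theta$. Then for every finite set $\theta_1',\dots,\theta_p' \in \Theta$ and every $S' \in \mathbb{C}^{p\times T}$, $\tfrac{1}{2}\|X - \sum_k \mathbf{a}(\theta_k')S_k'\|_F^2 + \lambda\sum_k\|S_k'\|_2 \geq \tfrac{1}{2}\|\hat N\|_F^2 + \lambda\sum_i\|\hat S_i\|_2$. -/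

import Mathlib

open Finset

/-- Sufficiency direction of the CLASS optimality condition: the continuum KKT
conditions imply global optimality over all finite index sets and amplitudes. -/
theorem stmt_15 (m n T : ℕ) (Θ : Set ℝ) (hΘ : IsCompact Θ)
    (a : ℝ → Fin m → ℂ) (ha : ∀ k : Fin m, ContinuousOn (fun θ => a θ k) Θ)
    (X : Fin m → Fin T → ℂ) (lam : ℝ) (hlam : 0 < lam)
    (θhat : Fin n → ℝ) (hθhat : ∀ i, θhat i ∈ Θ)
    (Shat : Fin n → Fin T → ℂ) (hrows : ∀ i, Shat i ≠ 0)
    (Nhat : Fin m → Fin T → ℂ)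
    (hN : ∀ k l, Nhat k l = X k l - ∑ i : Fin n, a (θhat i) k * Shat i l)
    (hKKTa : ∀ (i : Fin n) (l : Fin T),
      ∑ k : Fin m, (starRingEnd ℂ) (a (θhat i) k) * Nhat k l
        = (lam / Real.sqrt (∑ l' : Fin T, ‖Shat i l'‖ ^ 2) : ℝ) * Shat i l)
    (hKKTb : ∀ θ ∈ Θ, Real.sqrt (∑ l : Fin T,
      ‖∑ k : Fin m, (starRingEnd ℂ) (a θ k) * Nhat k l‖ ^ 2) ≤ lam) :
    ∀ (p : ℕ) (θ' : Fin p → ℝ), (∀ j, θ' j ∈ Θ) → ∀ (S' : Fin p → Fin T → ℂ),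
      (1 / 2) * (∑ k : Fin m, ∑ l : Fin T,
          ‖X k l - ∑ j : Fin p, a (θ' j) k * S' j l‖ ^ 2)
        + lam * ∑ j : Fin p, Real.sqrt (∑ l : Fin T, ‖S' j l‖ ^ 2)
      ≥ (1 / 2) * (∑ k : Fin m, ∑ l : Fin T, ‖Nhat k l‖ ^ 2)
        + lam * ∑ i : Fin n, Real.sqrt (∑ l : Fin T, ‖Shat i l‖ ^ 2) := by
  intro p θ' hθ' S'
  -- notation
  set r : Fin n → ℝ := fun i => Real.sqrt (∑ l : Fin T, ‖Shat i l‖ ^ 2) with hrdef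
  have hrpos : ∀ i, 0 < r i := by
    intro i
    apply Real.sqrt_pos.2
    have : ∃ l, Shat i l ≠ 0 := by
      by_contra h
      push_neg at h
      exact hrows i (funext h)
    obtain ⟨l, hl⟩ := this
    have hpos : (0:ℝ) < ‖Shat i l‖ ^ 2 := pow_pos (norm_pos_iff.mpr hl) 2
    calc (0:ℝ) < ‖Shat i l‖ ^ 2 := hpos
      _ ≤ _ := Finset.single_le_sum (f := fun l => ‖Shat i l‖ ^ 2)
          (fun _ _ => by positivity) (mem_univ l)
  have hrsq : ∀ i, r i ^ 2 = ∑ l : Fin T, Complex.normSq (Shat i l) := by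
    intro i
    rw [hrdef, Real.sq_sqrt (by positivity)]
    exact Finset.sum_congr rfl fun l _ => Complex.sq_norm _
  -- the difference D
  set D : Fin m → Fin T → ℂ := fun k l =>
    (∑ i : Fin n, a (θhat i) k * Shat i l) - (∑ j : Fin p, a (θ' j) k * S' j l) with hD
  have hresid : ∀ k l, X k l - ∑ j : Fin p, a (θ' j) k * S' j l = Nhat k l + D k l := by
    intro k l; rw [hN k l, hD]; ring
  -- expansion
  have hexp : ∀ k l, ‖X k l - ∑ j : Fin p, a (θ' j) k * S' j l‖ ^ 2
      ≥ ‖Nhat k l‖ ^ 2 + 2 * (Nhat k l * (starRingEnd ℂ) (D k l)).re := by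
    intro k l
    rw [hresid k l, Complex.sq_norm, Complex.sq_norm, Complex.normSq_add]
    have : 0 ≤ Complex.normSq (D k l) := Complex.normSq_nonneg _
    linarith
  -- cross term split
  have hcross : ∑ k : Fin m, ∑ l : Fin T, (Nhat k l * (starRingEnd ℂ) (D k l)).re
      = (∑ i : Fin n, ∑ l : Fin T,
          ((∑ k : Fin m, (starRingEnd ℂ) (a (θhat i) k) * Nhat k l) * (starRingEnd ℂ) (Shat i l)).re)
      - (∑ j : Fin p, ∑ l : Fin T,
          ((∑ k : Fin m, (starRingEnd ℂ) (a (θ' j) k) * Nhat k l) * (starRingEnd ℂ) (S' j l)).re) := by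
    have key : ∀ (q : ℕ) (b : Fin q → Fin m → ℂ) (S : Fin q → Fin T → ℂ),
        ∑ k : Fin m, ∑ l : Fin T,
          (Nhat k l * (starRingEnd ℂ) (∑ i : Fin q, b i k * S i l)).re
        = ∑ i : Fin q, ∑ l : Fin T,
            ((∑ k : Fin m, (starRingEnd ℂ) (b i k) * Nhat k l) * (starRingEnd ℂ) (S i l)).re := by
      intro q b S
      rw [Finset.sum_comm (γ := Fin m)]
      have : ∀ l : Fin T, ∑ k : Fin m, (Nhat k l * (starRingEnd ℂ) (∑ i : Fin q, b i k * S i l)).re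
          = ∑ i : Fin q, ((∑ k : Fin m, (starRingEnd ℂ) (b i k) * Nhat k l) * (starRingEnd ℂ) (S i l)).re := by
        intro l
        rw [← Complex.re_sum, ← Complex.re_sum]
        congr 1
        simp only [map_sum, map_mul, Finset.mul_sum, Finset.sum_mul]
        rw [Finset.sum_comm]
        exact Finset.sum_congr rfl fun i _ => Finset.sum_congr rfl fun k _ => by ring
      calc ∑ l : Fin T, ∑ k : Fin m, (Nhat k l * (starRingEnd ℂ) (∑ i : Fin q, b i k * S i l)).re
          = ∑ l : Fin T, ∑ i : Fin q, ((∑ k : Fin m, (starRingEnd ℂ) (b i k) * Nhat k l) * (starRingEnd ℂ) (S i l)).re := by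
            exact Finset.sum_congr rfl fun l _ => this l
        _ = _ := Finset.sum_comm
    have : ∀ k l, (Nhat k l * (starRingEnd ℂ) (D k l)).re
        = (Nhat k l * (starRingEnd ℂ) (∑ i : Fin n, a (θhat i) k * Shat i l)).re
        - (Nhat k l * (starRingEnd ℂ) (∑ j : Fin p, a (θ' j) k * S' j l)).re := by
      intro k l
      rw [hD]
      simp [map_sub, mul_sub]
    simp only [this, Finset.sum_sub_distrib]
    rw [key n (fun i => a (θhat i)) Shat, key p (fun j => a (θ' j)) S']
  -- first cross part equals λ Σ r_i
  have hpart1 : ∀ i : Fin n, ∑ l : Fin T,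
      ((∑ k : Fin m, (starRingEnd ℂ) (a (θhat i) k) * Nhat k l) * (starRingEnd ℂ) (Shat i l)).re
      = lam * r i := by
    intro i
    have : ∀ l : Fin T,
        ((∑ k : Fin m, (starRingEnd ℂ) (a (θhat i) k) * Nhat k l) * (starRingEnd ℂ) (Shat i l)).re
        = (lam / r i) * Complex.normSq (Shat i l) := by
      intro l
      rw [hKKTa i l]
      rw [mul_assoc, Complex.mul_conj]
      rw [← Complex.ofReal_mul]
      simp [hrdef]
    rw [Finset.sum_congr rfl fun l _ => this l, ← Finset.mul_sum, ← hrsq i,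
      div_mul_eq_mul_div, pow_two, mul_div_assoc, mul_div_assoc,
      div_self (hrpos i).ne', mul_one]
  -- second cross part bounded
  have hpart2 : ∀ j : Fin p, ∑ l : Fin T,
      ((∑ k : Fin m, (starRingEnd ℂ) (a (θ' j) k) * Nhat k l) * (starRingEnd ℂ) (S' j l)).re
      ≤ lam * Real.sqrt (∑ l : Fin T, ‖S' j l‖ ^ 2) := by
    intro j
    set g : Fin T → ℂ := fun l => ∑ k : Fin m, (starRingEnd ℂ) (a (θ' j) k) * Nhat k l with hg
    calc ∑ l : Fin T, (g l * (starRingEnd ℂ) (S' j l)).re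
        ≤ ∑ l : Fin T, ‖g l‖ * ‖S' j l‖ := by
          apply Finset.sum_le_sum
          intro l _
          calc (g l * (starRingEnd ℂ) (S' j l)).re
              ≤ ‖g l * (starRingEnd ℂ) (S' j l)‖ := Complex.re_le_norm _
            _ = ‖g l‖ * ‖S' j l‖ := by
                rw [norm_mul, Complex.norm_conj]
      _ ≤ Real.sqrt (∑ l : Fin T, ‖g l‖ ^ 2)
          * Real.sqrt (∑ l : Fin T, ‖S' j l‖ ^ 2) :=
          Real.sum_mul_le_sqrt_mul_sqrt _ _ _
      _ ≤ lam * Real.sqrt (∑ l : Fin T, ‖S' j l‖ ^ 2) := by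
          apply mul_le_mul_of_nonneg_right (hKKTb (θ' j) (hθ' j)) (Real.sqrt_nonneg _)
  -- combine
  have hsum2 : ∑ j : Fin p, ∑ l : Fin T,
      ((∑ k : Fin m, (starRingEnd ℂ) (a (θ' j) k) * Nhat k l) * (starRingEnd ℂ) (S' j l)).re
      ≤ lam * ∑ j : Fin p, Real.sqrt (∑ l : Fin T, ‖S' j l‖ ^ 2) := by
    rw [Finset.mul_sum]
    exact Finset.sum_le_sum fun j _ => hpart2 j
  have hsum1 : ∑ i : Fin n, ∑ l : Fin T,
      ((∑ k : Fin m, (starRingEnd ℂ) (a (θhat i) k) * Nhat k l) * (starRingEnd ℂ) (Shat i l)).re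
      = lam * ∑ i : Fin n, r i := by
    rw [Finset.mul_sum]
    exact Finset.sum_congr rfl fun i _ => hpart1 i
  have hbig : ∑ k : Fin m, ∑ l : Fin T,
      ‖X k l - ∑ j : Fin p, a (θ' j) k * S' j l‖ ^ 2
      ≥ (∑ k : Fin m, ∑ l : Fin T, ‖Nhat k l‖ ^ 2)
      + 2 * (∑ k : Fin m, ∑ l : Fin T, (Nhat k l * (starRingEnd ℂ) (D k l)).re) := by
    have := fun k l => hexp k l
    calc ∑ k : Fin m, ∑ l : Fin T, ‖X k l - ∑ j : Fin p, a (θ' j) k * S' j l‖ ^ 2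
        ≥ ∑ k : Fin m, ∑ l : Fin T,
          (‖Nhat k l‖ ^ 2 + 2 * (Nhat k l * (starRingEnd ℂ) (D k l)).re) := by
          apply Finset.sum_le_sum
          intro k _
          exact Finset.sum_le_sum fun l _ => hexp k l
      _ = _ := by
          simp only [Finset.sum_add_distrib, Finset.mul_sum]
  have hcross2 : ∑ k : Fin m, ∑ l : Fin T, (Nhat k l * (starRingEnd ℂ) (D k l)).re
      ≥ lam * (∑ i : Fin n, r i)
        - lam * ∑ j : Fin p, Real.sqrt (∑ l : Fin T, ‖S' j l‖ ^ 2) := by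
    rw [hcross, hsum1]
    linarith [hsum2]
  have h2 : (0:ℝ) ≤ lam * ∑ j : Fin p, Real.sqrt (∑ l : Fin T, ‖S' j l‖ ^ 2) := by
    positivity
  nlinarith [hbig, hcross2]
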